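/- Let $q_0, q_1$ be complex numbers with $|q_0| > 1$ and $|q_1| > 1$, and let $(i_k)_{k\ge1} \in \{0,1\}^\infty$. With $\pi_{q_0,q_1}(i_1i_2\cdots) = \sum_{k=1}^\infty i_k/(q_{i_1}q_{i_2}\cdots q_{i_k})$, we have $(q_1-1)\,\pi_{q_0,q_1}(i_1i_2\cdots) + (q_0-1)\,\pi_{q_1,q_0}((1-i_1)(1-i_2)\cdots) = 1$. -/

import Mathlib

noncomputable def piC (q0 q1 : ℂ) (i : ℕ → Bool) : ℂ :=
  ∑' k : ℕ, (cond (i k) 1 0 : ℂ) / ∏ j ∈ Finset.range (k + 1), (cond (i j) q1 q0)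

theorem stmt1 (q0 q1 : ℂ) (h0 : 1 < ‖q0‖) (h1 : 1 < ‖q1‖)
    (i : ℕ → Bool) :
    (q1 - 1) * piC q0 q1 i + (q0 - 1) * piC q1 q0 (fun k => !(i k)) = 1 := by
  set c : ℕ → ℂ := fun j => cond (i j) q1 q0 with hc
  set g : ℕ → ℂ := fun k => (∏ j ∈ Finset.range k, c j)⁻¹ with hgdef
  set m : ℝ := min ‖q0‖ ‖q1‖ with hm
  have hm1 : 1 < m := lt_min h0 h1
  have hcm : ∀ j, m ≤ ‖c j‖ := by
    intro j
    simp only [hc]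
    cases i j
    · exact min_le_left _ _
    · exact min_le_right _ _
  have hcne : ∀ j, c j ≠ 0 := by
    intro j hj
    have := hcm j
    rw [hj, norm_zero] at this
    linarith
  have hgn : ∀ k, ‖g k‖ ≤ m⁻¹ ^ k := by
    intro k
    simp only [hgdef, norm_inv, norm_prod]
    rw [inv_pow]
    apply inv_anti₀ (by positivity)
    calc m ^ k = ∏ _j ∈ Finset.range k, m := by rw [Finset.prod_const, Finset.card_range]
      _ ≤ ∏ j ∈ Finset.range k, ‖c j‖ :=
        Finset.prod_le_prod (fun _ _ => by positivity) (fun j _ => hcm j)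
  have hminv : m⁻¹ < 1 := inv_lt_one_of_one_lt₀ hm1
  have hgeo : Summable (fun k : ℕ => m⁻¹ ^ k) :=
    summable_geometric_of_lt_one (by positivity) hminv
  have hgsum : Summable g := Summable.of_norm_bounded hgeo hgn
  have hgsum1 : Summable (fun k => g (k + 1)) := (summable_nat_add_iff 1).2 hgsum
  -- the key per-term identity: c k * g (k+1) = g k
  have hkey : ∀ k, c k * g (k + 1) = g k := by
    intro k
    have hprodne : (∏ j ∈ Finset.range k, c j) ≠ 0 :=
      Finset.prod_ne_zero_iff.2 (fun j _ => hcne j)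
    simp only [hgdef, Finset.prod_range_succ, mul_inv]
    rw [← mul_assoc, mul_comm (c k), mul_assoc,
      mul_inv_cancel₀ (hcne k), mul_one]
  -- rewrite each piC as a tsum over A, B
  have hA : piC q0 q1 i = ∑' k, (cond (i k) 1 0 : ℂ) * g (k + 1) := by
    unfold piC
    exact tsum_congr fun k => div_eq_mul_inv _ _
  have hB : piC q1 q0 (fun k => !(i k)) = ∑' k, (cond (!(i k)) 1 0 : ℂ) * g (k + 1) := by
    unfold piC
    refine tsum_congr fun k => ?_
    rw [div_eq_mul_inv, hgdef]
    congr 2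
    refine Finset.prod_congr rfl fun j _ => ?_
    simp only [hc]
    cases i j <;> rfl
  have hAsum : Summable (fun k => (cond (i k) 1 0 : ℂ) * g (k + 1)) := by
    apply Summable.of_norm_bounded hgsum1.norm
    intro k
    rw [norm_mul]
    cases i k <;> simp
  have hBsum : Summable (fun k => (cond (!(i k)) 1 0 : ℂ) * g (k + 1)) := by
    apply Summable.of_norm_bounded hgsum1.norm
    intro k
    rw [norm_mul]
    cases i k <;> simp
  rw [hA, hB, ← tsum_mul_left, ← tsum_mul_left,
    ← (hAsum.mul_left _).tsum_add (hBsum.mul_left _)]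
  have hterm : ∀ k, (q1 - 1) * ((cond (i k) 1 0 : ℂ) * g (k + 1))
      + (q0 - 1) * ((cond (!(i k)) 1 0 : ℂ) * g (k + 1)) = g k - g (k + 1) := by
    intro k
    have hh := hkey k
    cases hik : i k <;>
      [ (have hck : c k = q0 := by simp [hc, hik]);
        (have hck : c k = q1 := by simp [hc, hik]) ] <;>
      rw [hck] at hh <;>
      simp only [hik, cond_true, cond_false, Bool.not_true, Bool.not_false] <;>
      rw [← hh] <;> ring
  rw [tsum_congr hterm, hgsum.tsum_sub hgsum1]
  have h0add : ∑' k, g k = g 0 + ∑' k, g (k + 1) := hgsum.tsum_eq_zero_add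
  rw [h0add]
  simp [hgdef]
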